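/- arXiv:2208.11153 — 2 statements merged into one kernel-verified Lean document; each statement's English description precedes it below -/
import Mathlib

section
/- Let n ≥ 2, p > n, ε > 0, C_f > 0, δ > 0, and α = (p-n)/(p-1). Define v₀(r) for r ≥ 1 by v₀(r) = ∫₀¹ φ⁻¹( ( (C_f/n)(1−τⁿ) + C_f/(p−n+ε) ) τ^(−(n−1)) ) dτ + ∫₁^r φ⁻¹( (C_f/(p−n+ε)) τ^(n−p−ε) τ^(−(n−1)) ) dτ, where φ⁻¹(s) ≤ (s/δ)^(1/(p-1)). Then v₀(r) ≤ ( C_f (p+ε) / (δ n (p−n+ε)) )^(1/(p-1)) · ( 1/α + (p−1)/ε ) for all r ≥ 1. -/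
open Real Set

theorem stmt2 (n : ℕ) (p ε Cf δ α : ℝ) (ψ : ℝ → ℝ)
    (hn : 2 ≤ n) (hp : (n : ℝ) < p) (hε : 0 < ε) (hCf : 0 < Cf) (hδ : 0 < δ)
    (hα : α = (p - n) / (p - 1))
    (hψ : ∀ s ≥ (0:ℝ), ψ s ≤ (s / δ) ^ (1 / (p - 1))) :
    ∀ r ≥ (1:ℝ),
      (∫ τ in (0:ℝ)..1,
          ψ ((Cf / n * (1 - τ ^ n) + Cf / (p - n + ε)) * τ ^ (-((n : ℝ) - 1)))) +
      (∫ τ in (1:ℝ)..r,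
          ψ (Cf / (p - n + ε) * τ ^ ((n : ℝ) - p - ε) * τ ^ (-((n : ℝ) - 1)))) ≤
      (Cf * (p + ε) / (δ * n * (p - n + ε))) ^ (1 / (p - 1)) * (1 / α + (p - 1) / ε) := by
  intro r hr
  have hn2 : (2:ℝ) ≤ (n:ℝ) := by exact_mod_cast hn
  have hn0 : (0:ℝ) < (n:ℝ) := by linarith
  have hp1 : 0 < p - 1 := by linarith
  have hpn : 0 < p - n := by linarith
  have hpe : 0 < p - n + ε := by linarith
  have hαpos : 0 < α := by rw [hα]; exact div_pos hpn hp1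
  set c : ℝ := 1 / (p - 1) with hc
  have hc0 : 0 < c := by positivity
  set K : ℝ := (Cf * (p + ε) / (δ * n * (p - n + ε))) ^ c with hKdef
  have hbasepos : 0 < Cf * (p + ε) / (δ * (n:ℝ) * (p - n + ε)) :=
    div_pos (mul_pos hCf (by linarith)) (mul_pos (mul_pos hδ hn0) hpe)
  have hK0 : 0 ≤ K := Real.rpow_nonneg hbasepos.le _
  -- the base of K written as B / δ
  set A : ℝ := Cf / n + Cf / (p - n + ε) with hAdef
  have hA0 : 0 ≤ A := by positivity
  have hbase : Cf * (p + ε) / (δ * n * (p - n + ε)) = A / δ := by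
    rw [hAdef]; field_simp; ring
  have hKA : K = (A / δ) ^ c := by rw [hKdef, hbase]
  -- pointwise bound on [0,1]
  have hb1 : ∀ τ ∈ Icc (0:ℝ) 1,
      ψ ((Cf / n * (1 - τ ^ n) + Cf / (p - n + ε)) * τ ^ (-((n : ℝ) - 1))) ≤
      K * τ ^ (-(((n:ℝ) - 1) / (p - 1))) := by
    rintro τ ⟨hτ0, hτ1⟩
    have hpow : (0:ℝ) ≤ τ ^ (-((n:ℝ) - 1)) := Real.rpow_nonneg hτ0 _
    have hτn : τ ^ n ≤ 1 := pow_le_one₀ hτ0 hτ1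
    have hcoef0 : 0 ≤ Cf / n * (1 - τ ^ n) + Cf / (p - n + ε) := by
      have h1 : 0 ≤ 1 - τ ^ n := by linarith
      positivity
    have hs0 : 0 ≤ (Cf / n * (1 - τ ^ n) + Cf / (p - n + ε)) * τ ^ (-((n:ℝ) - 1)) :=
      mul_nonneg hcoef0 hpow
    refine (hψ _ hs0).trans ?_
    have hcoef : Cf / n * (1 - τ ^ n) + Cf / (p - n + ε) ≤ A := by
      have hd : 0 < Cf / n := div_pos hCf hn0
      have hτnn : 0 ≤ τ ^ n := pow_nonneg hτ0 n
      have h1 : Cf / n * (1 - τ ^ n) ≤ Cf / n := by nlinarith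
      rw [hAdef]; linarith
    have hle : (Cf / n * (1 - τ ^ n) + Cf / (p - n + ε)) * τ ^ (-((n:ℝ) - 1)) / δ ≤
        A / δ * τ ^ (-((n:ℝ) - 1)) := by
      rw [div_le_iff₀ hδ]
      calc (Cf / n * (1 - τ ^ n) + Cf / (p - n + ε)) * τ ^ (-((n:ℝ) - 1))
          ≤ A * τ ^ (-((n:ℝ) - 1)) := mul_le_mul_of_nonneg_right hcoef hpow
        _ = A / δ * τ ^ (-((n:ℝ) - 1)) * δ := by field_simp
    calc ((Cf / n * (1 - τ ^ n) + Cf / (p - n + ε)) * τ ^ (-((n:ℝ) - 1)) / δ) ^ c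
        ≤ (A / δ * τ ^ (-((n:ℝ) - 1))) ^ c := by
          apply Real.rpow_le_rpow (by positivity) hle hc0.le
      _ = (A / δ) ^ c * (τ ^ (-((n:ℝ) - 1))) ^ c := Real.mul_rpow (by positivity) hpow
      _ = K * τ ^ (-(((n:ℝ) - 1) / (p - 1))) := by
          rw [hKA, ← Real.rpow_mul hτ0]
          congr 1
          rw [hc]; ring
  -- pointwise bound on [1,r]
  have hb2 : ∀ τ ∈ Icc (1:ℝ) r,
      ψ (Cf / (p - n + ε) * τ ^ ((n : ℝ) - p - ε) * τ ^ (-((n : ℝ) - 1))) ≤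
      K * τ ^ ((1 - p - ε) / (p - 1)) := by
    rintro τ ⟨hτ1, hτr⟩
    have hτ0 : (0:ℝ) < τ := by linarith
    have heq : Cf / (p - n + ε) * τ ^ ((n : ℝ) - p - ε) * τ ^ (-((n : ℝ) - 1)) =
        Cf / (p - n + ε) * τ ^ (1 - p - ε) := by
      rw [mul_assoc, ← Real.rpow_add hτ0]
      congr 2
      ring
    rw [heq]
    have hs0 : 0 ≤ Cf / (p - n + ε) * τ ^ (1 - p - ε) := by positivity
    refine (hψ _ hs0).trans ?_
    have hCA : Cf / (p - n + ε) ≤ A := by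
      rw [hAdef]
      have : 0 ≤ Cf / n := by positivity
      linarith
    have hle : Cf / (p - n + ε) * τ ^ (1 - p - ε) / δ ≤ A / δ * τ ^ (1 - p - ε) := by
      rw [div_le_iff₀ hδ]
      calc Cf / (p - n + ε) * τ ^ (1 - p - ε)
          ≤ A * τ ^ (1 - p - ε) :=
            mul_le_mul_of_nonneg_right hCA (Real.rpow_nonneg hτ0.le _)
        _ = A / δ * τ ^ (1 - p - ε) * δ := by field_simp
    calc (Cf / (p - n + ε) * τ ^ (1 - p - ε) / δ) ^ c
        ≤ (A / δ * τ ^ (1 - p - ε)) ^ c := by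
          apply Real.rpow_le_rpow (by positivity) hle hc0.le
      _ = (A / δ) ^ c * (τ ^ (1 - p - ε)) ^ c :=
          Real.mul_rpow (by positivity) (Real.rpow_nonneg hτ0.le _)
      _ = K * τ ^ ((1 - p - ε) / (p - 1)) := by
          rw [hKA, ← Real.rpow_mul hτ0.le]
          congr 1
          rw [hc]; ring
  -- integrability of the bounds
  have hβ : (-1:ℝ) < -(((n:ℝ) - 1) / (p - 1)) := by
    have h1 : ((n:ℝ) - 1) / (p - 1) < 1 := (div_lt_one hp1).mpr (by linarith)
    linarith
  have hint1 : IntervalIntegrable (fun τ : ℝ => K * τ ^ (-(((n:ℝ) - 1) / (p - 1))))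
      MeasureTheory.volume 0 1 := (intervalIntegral.intervalIntegrable_rpow' hβ).const_mul K
  have h0mem : (0:ℝ) ∉ Set.uIcc (1:ℝ) r := by
    rw [Set.mem_uIcc]
    push_neg
    constructor <;> intro h <;> linarith
  have hint2 : IntervalIntegrable (fun τ : ℝ => K * τ ^ ((1 - p - ε) / (p - 1)))
      MeasureTheory.volume 1 r := (intervalIntegral.intervalIntegrable_rpow (Or.inr h0mem)).const_mul K
  -- value of the first bound integral
  have hαeq : -(((n:ℝ) - 1) / (p - 1)) + 1 = α := by
    rw [hα]; field_simp; ring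
  have hI1 : (∫ τ in (0:ℝ)..1, K * τ ^ (-(((n:ℝ) - 1) / (p - 1)))) = K * (1 / α) := by
    rw [intervalIntegral.integral_const_mul, integral_rpow (Or.inl hβ), hαeq,
      Real.one_rpow, Real.zero_rpow hαpos.ne']
    ring
  -- bound for the second integral
  have ha1 : (1 - p - ε) / (p - 1) + 1 = -(ε / (p - 1)) := by field_simp; ring
  have hane : (1 - p - ε) / (p - 1) ≠ -1 := by
    intro h
    have : (1 - p - ε) / (p - 1) + 1 = 0 := by rw [h]; ring
    rw [ha1] at this
    have : ε / (p - 1) = 0 := by linarith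
    have := (div_eq_zero_iff.mp this)
    rcases this with h' | h' <;> linarith
  have hI2 : (∫ τ in (1:ℝ)..r, K * τ ^ ((1 - p - ε) / (p - 1))) ≤ K * ((p - 1) / ε) := by
    rw [intervalIntegral.integral_const_mul, integral_rpow (Or.inr ⟨hane, h0mem⟩),
      Real.one_rpow, ha1]
    apply mul_le_mul_of_nonneg_left _ hK0
    have hr0 : 0 ≤ r ^ (-(ε / (p - 1))) := Real.rpow_nonneg (by linarith) _
    have heq : (r ^ (-(ε / (p - 1))) - 1) / -(ε / (p - 1)) =
        (1 - r ^ (-(ε / (p - 1)))) / (ε / (p - 1)) := by ring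
    rw [heq]
    calc (1 - r ^ (-(ε / (p - 1)))) / (ε / (p - 1)) ≤ 1 / (ε / (p - 1)) :=
          (div_le_div_iff_of_pos_right (div_pos hε hp1)).mpr (by linarith)
      _ = (p - 1) / ε := one_div_div ε (p - 1)
  -- first term
  have hT1 : (∫ τ in (0:ℝ)..1,
      ψ ((Cf / n * (1 - τ ^ n) + Cf / (p - n + ε)) * τ ^ (-((n : ℝ) - 1)))) ≤ K * (1 / α) := by
    by_cases h : IntervalIntegrable
        (fun τ : ℝ => ψ ((Cf / n * (1 - τ ^ n) + Cf / (p - n + ε)) * τ ^ (-((n : ℝ) - 1))))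
        MeasureTheory.volume 0 1
    · calc (∫ τ in (0:ℝ)..1,
            ψ ((Cf / n * (1 - τ ^ n) + Cf / (p - n + ε)) * τ ^ (-((n : ℝ) - 1))))
          ≤ ∫ τ in (0:ℝ)..1, K * τ ^ (-(((n:ℝ) - 1) / (p - 1))) :=
            intervalIntegral.integral_mono_on zero_le_one h hint1 hb1
        _ = K * (1 / α) := hI1
    · rw [intervalIntegral.integral_undef h]
      exact mul_nonneg hK0 (one_div_nonneg.mpr hαpos.le)
  -- second term
  have hT2 : (∫ τ in (1:ℝ)..r,
      ψ (Cf / (p - n + ε) * τ ^ ((n : ℝ) - p - ε) * τ ^ (-((n : ℝ) - 1)))) ≤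
      K * ((p - 1) / ε) := by
    by_cases h : IntervalIntegrable
        (fun τ : ℝ => ψ (Cf / (p - n + ε) * τ ^ ((n : ℝ) - p - ε) * τ ^ (-((n : ℝ) - 1))))
        MeasureTheory.volume 1 r
    · calc (∫ τ in (1:ℝ)..r,
            ψ (Cf / (p - n + ε) * τ ^ ((n : ℝ) - p - ε) * τ ^ (-((n : ℝ) - 1))))
          ≤ ∫ τ in (1:ℝ)..r, K * τ ^ ((1 - p - ε) / (p - 1)) :=
            intervalIntegral.integral_mono_on hr h hint2 hb2
        _ ≤ K * ((p - 1) / ε) := hI2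
    · rw [intervalIntegral.integral_undef h]
      exact mul_nonneg hK0 (div_nonneg hp1.le hε.le)
  calc _ ≤ K * (1 / α) + K * ((p - 1) / ε) := add_le_add hT1 hT2
    _ = K * (1 / α + (p - 1) / ε) := by ring
end

section
/- Let 1 < p ≤ n, θ ∈ (0,1), and s = n/(p−θ). For measurable f on a set A ⊂ ℝⁿ of finite measure with f ∈ L^s(A), with f^♯ its Schwarz symmetrization, one has ∫_0^1 ρ^(−(n−1)/(p−1)) ( ∫_{B_ρ} f^♯(x) dx )^(1/(p−1)) dρ ≤ ω_n^(1/(s'(p−1))) · ( s(p−1)/(sp−n) ) · ‖f‖_{L^s(A)}^(1/(p−1)), where s' = s/(s−1). -/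
open Real Set MeasureTheory
open scoped ENNReal

/-- Schwarz (spherically symmetric decreasing) rearrangement of `|f|·1_A`. -/
noncomputable def schwarzSymm (n : ℕ) (A : Set (EuclideanSpace ℝ (Fin n)))
    (f : EuclideanSpace ℝ (Fin n) → ℝ) (x : EuclideanSpace ℝ (Fin n)) : ℝ :=
  sSup {t : ℝ | 0 ≤ t ∧
    (volume (Metric.ball (0 : EuclideanSpace ℝ (Fin n)) 1)).toReal * ‖x‖ ^ n ≤
      (volume {y ∈ A | t < |f y|}).toReal}

namespace Stmt12Aux

open Metric

variable {n : ℕ} {A : Set (EuclideanSpace ℝ (Fin n))} {f : EuclideanSpace ℝ (Fin n) → ℝ}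

/-- the (real) volume of the unit ball -/
noncomputable def ωr (n : ℕ) : ℝ :=
  (volume (Metric.ball (0 : EuclideanSpace ℝ (Fin n)) 1)).toReal

/-- the distribution function -/
noncomputable def μd (A : Set (EuclideanSpace ℝ (Fin n)))
    (f : EuclideanSpace ℝ (Fin n) → ℝ) (t : ℝ) : ℝ≥0∞ :=
  volume {y ∈ A | t < |f y|}

/-- the set whose supremum defines `schwarzSymm` -/
def Sx (n : ℕ) (A : Set (EuclideanSpace ℝ (Fin n)))
    (f : EuclideanSpace ℝ (Fin n) → ℝ) (x : EuclideanSpace ℝ (Fin n)) : Set ℝ :=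
  {t : ℝ | 0 ≤ t ∧ ωr n * ‖x‖ ^ n ≤ (μd A f t).toReal}

lemma schwarz_eq (x : EuclideanSpace ℝ (Fin n)) :
    schwarzSymm n A f x = sSup (Sx n A f x) := rfl

lemma schwarz_nonneg (x : EuclideanSpace ℝ (Fin n)) : 0 ≤ schwarzSymm n A f x :=
  Real.sSup_nonneg fun _ ht => ht.1

lemma hω_pos : 0 < ωr n :=
  ENNReal.toReal_pos (measure_ball_pos _ _ one_pos).ne' measure_ball_lt_top.ne

lemma μd_mono {t t' : ℝ} (h : t ≤ t') : μd A f t' ≤ μd A f t :=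
  measure_mono fun y hy => ⟨hy.1, lt_of_le_of_lt h hy.2⟩

lemma μd_ne_top (hAfin : volume A ≠ ⊤) (t : ℝ) : μd A f t ≠ ⊤ :=
  ne_top_of_le_ne_top hAfin (measure_mono (sep_subset _ _))

lemma levelset_subset (hAfin : volume A ≠ ⊤) {t : ℝ} (ht : 0 ≤ t) :
    {x | t < schwarzSymm n A f x} ⊆
      {x : EuclideanSpace ℝ (Fin n) | ωr n * ‖x‖ ^ n ≤ (μd A f t).toReal} := by
  intro x hx
  simp only [mem_setOf_eq] at hx ⊢
  rw [schwarz_eq] at hx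
  have hbdd : BddAbove (Sx n A f x) := by
    by_contra hb
    rw [Real.sSup_of_not_bddAbove hb] at hx; linarith
  have hne : (Sx n A f x).Nonempty := by
    by_contra hne
    rw [not_nonempty_iff_eq_empty] at hne
    rw [hne, Real.sSup_empty] at hx; linarith
  obtain ⟨t', ht'S, htt'⟩ := exists_lt_of_lt_csSup hne hx
  exact ht'S.2.trans (ENNReal.toReal_mono (μd_ne_top hAfin t) (μd_mono htt'.le))

lemma bddAbove_Sx (hA : MeasurableSet A) (hAfin : volume A ≠ ⊤) (hf : Measurable f)
    {s : ℝ} (hs : 0 < s)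
    (hJ : ∫⁻ y in A, ENNReal.ofReal (|f y| ^ s) ∂volume ≠ ⊤)
    {x : EuclideanSpace ℝ (Fin n)} (hx : x ≠ 0) : BddAbove (Sx n A f x) := by
  set J := ∫⁻ y in A, ENNReal.ofReal (|f y| ^ s) ∂volume with hJdef
  have hc : 0 < ωr n * ‖x‖ ^ n :=
    mul_pos hω_pos (pow_pos (norm_pos_iff.mpr hx) n)
  refine ⟨(J.toReal / (ωr n * ‖x‖ ^ n)) ^ s⁻¹, fun t' ht' => ?_⟩
  obtain ⟨ht'0, ht'le⟩ := ht'
  have hgm : AEMeasurable (fun y => ENNReal.ofReal (|f y| ^ s)) (volume.restrict A) :=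
    ((hf.abs.pow measurable_const).ennreal_ofReal).aemeasurable
  have markov := mul_meas_ge_le_lintegral₀ hgm (ENNReal.ofReal (t' ^ s))
  have hsub : {y | t' < |f y|} ⊆
      {y | ENNReal.ofReal (t' ^ s) ≤ ENNReal.ofReal (|f y| ^ s)} := fun y hy =>
    ENNReal.ofReal_le_ofReal (Real.rpow_le_rpow ht'0 (le_of_lt hy) hs.le)
  have hrest : (volume.restrict A) {y | t' < |f y|} = μd A f t' := by
    rw [Measure.restrict_apply (measurableSet_lt measurable_const hf.abs)]
    congr 1
    ext y; simp only [mem_inter_iff, mem_setOf_eq, μd, mem_sep_iff]; tauto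
  have key : ENNReal.ofReal (t' ^ s) * μd A f t' ≤ J := by
    calc ENNReal.ofReal (t' ^ s) * μd A f t'
        = ENNReal.ofReal (t' ^ s) * (volume.restrict A) {y | t' < |f y|} := by rw [hrest]
      _ ≤ ENNReal.ofReal (t' ^ s) *
          (volume.restrict A) {y | ENNReal.ofReal (t' ^ s) ≤ ENNReal.ofReal (|f y| ^ s)} :=
          mul_le_mul_right (measure_mono hsub) _
      _ ≤ J := markov
  have h1 : ENNReal.ofReal (ωr n * ‖x‖ ^ n) ≤ μd A f t' := by
    calc ENNReal.ofReal (ωr n * ‖x‖ ^ n) ≤ ENNReal.ofReal ((μd A f t').toReal) :=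
        ENNReal.ofReal_le_ofReal ht'le
      _ = μd A f t' := ENNReal.ofReal_toReal (μd_ne_top hAfin t')
  have h2 : ENNReal.ofReal (t' ^ s * (ωr n * ‖x‖ ^ n)) ≤ J := by
    rw [ENNReal.ofReal_mul (Real.rpow_nonneg ht'0 s)]
    exact le_trans (mul_le_mul_right h1 _) key
  have h3 : t' ^ s * (ωr n * ‖x‖ ^ n) ≤ J.toReal :=
    (ENNReal.ofReal_le_iff_le_toReal hJ).mp h2
  have h4 : t' ^ s ≤ J.toReal / (ωr n * ‖x‖ ^ n) := (le_div_iff₀ hc).mpr h3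
  calc t' = (t' ^ s) ^ s⁻¹ := (Real.rpow_rpow_inv ht'0 hs.ne').symm
    _ ≤ (J.toReal / (ωr n * ‖x‖ ^ n)) ^ s⁻¹ :=
      Real.rpow_le_rpow (Real.rpow_nonneg ht'0 s) h4 (inv_nonneg.mpr hs.le)

lemma levelset_eq (hn : n ≠ 0) (hA : MeasurableSet A) (hAfin : volume A ≠ ⊤)
    (hf : Measurable f) {s : ℝ} (hs : 0 < s)
    (hJ : ∫⁻ y in A, ENNReal.ofReal (|f y| ^ s) ∂volume ≠ ⊤)
    {t : ℝ} (ht : 0 ≤ t) :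
    {x | t < schwarzSymm n A f x} =
      {(0 : EuclideanSpace ℝ (Fin n))}ᶜ ∩
        ⋃ q : ℚ, {x : EuclideanSpace ℝ (Fin n) |
          t < (q : ℝ) ∧ ωr n * ‖x‖ ^ n ≤ (μd A f q).toReal} := by
  ext x
  simp only [mem_setOf_eq, mem_inter_iff, mem_compl_iff, mem_singleton_iff, mem_iUnion]
  constructor
  · intro hx
    rw [schwarz_eq] at hx
    have hx0 : x ≠ 0 := by
      rintro rfl
      have hS0 : Sx n A f 0 = Ici (0 : ℝ) := by
        ext u
        simp [Sx, norm_zero, zero_pow hn, ENNReal.toReal_nonneg]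
      rw [hS0, Real.sSup_of_not_bddAbove (not_bddAbove_Ici (a := (0:ℝ)))] at hx
      linarith
    have hbdd : BddAbove (Sx n A f x) := bddAbove_Sx hA hAfin hf hs hJ hx0
    have hne : (Sx n A f x).Nonempty := by
      by_contra hne
      rw [not_nonempty_iff_eq_empty] at hne
      rw [hne, Real.sSup_empty] at hx; linarith
    obtain ⟨t', ht'S, htt'⟩ := exists_lt_of_lt_csSup hne hx
    obtain ⟨q, hq1, hq2⟩ := exists_rat_btwn htt'
    exact ⟨hx0, q, hq1,
      le_trans ht'S.2 (ENNReal.toReal_mono (μd_ne_top hAfin _) (μd_mono hq2.le))⟩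
  · rintro ⟨hx0, q, hq1, hq2⟩
    rw [schwarz_eq]
    have hmem : (q : ℝ) ∈ Sx n A f x := ⟨le_trans ht hq1.le, hq2⟩
    exact lt_of_lt_of_le hq1 (le_csSup (bddAbove_Sx hA hAfin hf hs hJ hx0) hmem)

lemma measurable_schwarz (hn : n ≠ 0) (hA : MeasurableSet A) (hAfin : volume A ≠ ⊤)
    (hf : Measurable f) {s : ℝ} (hs : 0 < s)
    (hJ : ∫⁻ y in A, ENNReal.ofReal (|f y| ^ s) ∂volume ≠ ⊤) :
    Measurable (schwarzSymm n A f) := by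
  apply measurable_of_Ioi
  intro t
  rcases lt_or_ge t 0 with htneg | ht
  · have : schwarzSymm n A f ⁻¹' Ioi t = univ :=
      eq_univ_of_forall fun x => lt_of_lt_of_le htneg (schwarz_nonneg x)
    rw [this]; exact MeasurableSet.univ
  · rw [show schwarzSymm n A f ⁻¹' Ioi t = {x | t < schwarzSymm n A f x} from rfl,
      levelset_eq hn hA hAfin hf hs hJ ht]
    refine (measurableSet_singleton 0).compl.inter (MeasurableSet.iUnion fun q => ?_)
    rw [show {x : EuclideanSpace ℝ (Fin n) |
        t < (q : ℝ) ∧ ωr n * ‖x‖ ^ n ≤ (μd A f q).toReal} =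
        {x : EuclideanSpace ℝ (Fin n) | t < (q : ℝ)} ∩
          {x : EuclideanSpace ℝ (Fin n) | ωr n * ‖x‖ ^ n ≤ (μd A f q).toReal} from rfl]
    exact (MeasurableSet.const _).inter
      (measurableSet_le (measurable_const.mul (measurable_norm.pow measurable_const))
        measurable_const)

lemma meas_levelset_le (hn : n ≠ 0) (hAfin : volume A ≠ ⊤) {t : ℝ} (ht : 0 ≤ t) :
    volume {x | t < schwarzSymm n A f x} ≤ μd A f t := by
  set V := volume (Metric.ball (0 : EuclideanSpace ℝ (Fin n)) 1) with hV
  have hV0 : V ≠ 0 := (measure_ball_pos _ _ one_pos).ne'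
  have hVtop : V ≠ ⊤ := measure_ball_lt_top.ne
  set d : ℝ := (μd A f t).toReal / ωr n with hd_def
  have hd : 0 ≤ d := div_nonneg ENNReal.toReal_nonneg hω_pos.le
  set R : ℝ := d ^ (n : ℝ)⁻¹ with hR
  have hRn : R ^ n = d := by
    rw [hR, ← Real.rpow_natCast (d ^ (n : ℝ)⁻¹) n, ← Real.rpow_mul hd,
      inv_mul_cancel₀ (by exact_mod_cast hn : (n : ℝ) ≠ 0), Real.rpow_one]
  have hsub : {x | t < schwarzSymm n A f x} ⊆
      Metric.closedBall (0 : EuclideanSpace ℝ (Fin n)) R := by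
    intro x hx
    have h1 := levelset_subset hAfin ht hx
    simp only [mem_setOf_eq] at h1
    have h2 : ‖x‖ ^ n ≤ d := by
      rw [hd_def]
      rw [mul_comm] at h1
      exact (le_div_iff₀ hω_pos).mpr h1
    have h3 : ‖x‖ ≤ R :=
      le_of_pow_le_pow_left₀ hn (Real.rpow_nonneg hd _) (by rw [hRn]; exact h2)
    simpa [Metric.mem_closedBall, dist_zero_right] using h3
  calc volume {x | t < schwarzSymm n A f x}
      ≤ volume (Metric.closedBall (0 : EuclideanSpace ℝ (Fin n)) R) := measure_mono hsub
    _ = ENNReal.ofReal (R ^ Module.finrank ℝ (EuclideanSpace ℝ (Fin n))) * V :=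
        MeasureTheory.Measure.addHaar_closedBall _ _ (Real.rpow_nonneg hd _)
    _ = ENNReal.ofReal d * V := by rw [finrank_euclideanSpace_fin, hRn]
    _ = μd A f t := by
        rw [hd_def, ENNReal.ofReal_div_of_pos hω_pos,
          ENNReal.ofReal_toReal (μd_ne_top hAfin t),
          show ENNReal.ofReal (ωr n) = V from ENNReal.ofReal_toReal hVtop]
        exact ENNReal.div_mul_cancel hV0 hVtop

lemma lintegral_rpow_schwarz_le (hn : n ≠ 0) (hA : MeasurableSet A) (hAfin : volume A ≠ ⊤)
    (hf : Measurable f) {s : ℝ} (hs : 0 < s)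
    (hJ : ∫⁻ y in A, ENNReal.ofReal (|f y| ^ s) ∂volume ≠ ⊤) :
    ∫⁻ x, ENNReal.ofReal (schwarzSymm n A f x ^ s) ∂volume ≤
      ∫⁻ y in A, ENNReal.ofReal (|f y| ^ s) ∂volume := by
  rw [lintegral_rpow_eq_lintegral_meas_lt_mul volume
      (Filter.Eventually.of_forall schwarz_nonneg)
      (measurable_schwarz hn hA hAfin hf hs hJ).aemeasurable hs,
    lintegral_rpow_eq_lintegral_meas_lt_mul (volume.restrict A)
      (Filter.Eventually.of_forall fun y => abs_nonneg (f y)) hf.abs.aemeasurable hs]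
  refine mul_le_mul_right (lintegral_mono_ae ?_) _
  filter_upwards [self_mem_ae_restrict measurableSet_Ioi] with t htpos
  refine mul_le_mul_left ?_ _
  calc volume {a | t < schwarzSymm n A f a} ≤ μd A f t :=
      meas_levelset_le hn hAfin (le_of_lt htpos)
    _ = (volume.restrict A) {a | t < |f a|} := by
        rw [Measure.restrict_apply (measurableSet_lt measurable_const hf.abs),
          show {a | t < |f a|} ∩ A = {y ∈ A | t < |f y|} by ext y; simp [mem_sep_iff]; tauto]
        rfl

end Stmt12Aux

theorem stmt12 (n : ℕ) (p θ s s' : ℝ) (A : Set (EuclideanSpace ℝ (Fin n)))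
    (f : EuclideanSpace ℝ (Fin n) → ℝ)
    (hn : 2 ≤ n) (hp1 : 1 < p) (hpn : p ≤ n) (hθ0 : 0 < θ) (hθ1 : θ < 1)
    (hs : s = (n : ℝ) / (p - θ)) (hs' : s' = s / (s - 1))
    (hA : MeasurableSet A) (hAfin : volume A ≠ ⊤)
    (hf : Measurable f)
    (hfL : IntegrableOn (fun x => |f x| ^ s) A volume) :
    (∫ ρ in (0:ℝ)..1,
        ρ ^ (-((n : ℝ) - 1) / (p - 1)) *
          (∫ x in Metric.ball (0 : EuclideanSpace ℝ (Fin n)) ρ, schwarzSymm n A f x) ^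
            (1 / (p - 1))) ≤
      (volume (Metric.ball (0 : EuclideanSpace ℝ (Fin n)) 1)).toReal ^ (1 / (s' * (p - 1))) *
        (s * (p - 1) / (s * p - n)) * ((∫ x in A, |f x| ^ s) ^ (1 / s)) ^ (1 / (p - 1)) := by
  have hn0 : n ≠ 0 := by omega
  have hn1 : (2:ℝ) ≤ n := by exact_mod_cast hn
  have hp1' : (0:ℝ) < p - 1 := by linarith
  have hpθ : (0:ℝ) < p - θ := by linarith
  have hs1 : 1 < s := by rw [hs, lt_div_iff₀ hpθ]; linarith
  have hs0 : (0:ℝ) < s := lt_trans one_pos hs1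
  have hconj : s.HolderConjugate s' := by
    have h := Real.HolderConjugate.conjExponent (p := s) hs1
    rwa [Real.conjExponent, ← hs'] at h
  have hs'0 : (0:ℝ) < s' := hconj.symm.pos
  have hns : (n:ℝ) / s = p - θ := by rw [hs]; field_simp
  have hn_eq : (n:ℝ) = s * (p - θ) := by rw [hs]; field_simp
  have hns' : (n:ℝ) / s' = n - (p - θ) := by
    have h1 : s'⁻¹ = 1 - s⁻¹ := by linarith [hconj.inv_add_inv_eq_one]
    rw [div_eq_mul_inv, h1, mul_sub, mul_one, ← div_eq_mul_inv, hns]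
  have hJ : (∫⁻ y in A, ENNReal.ofReal (|f y| ^ s) ∂volume) ≠ ⊤ := hfL.lintegral_lt_top.ne
  set Ir : ℝ := ∫ x in A, |f x| ^ s with hIr
  have hIr0 : 0 ≤ Ir := integral_nonneg fun x => Real.rpow_nonneg (abs_nonneg _) _
  have hJI : ENNReal.ofReal Ir = ∫⁻ y in A, ENNReal.ofReal (|f y| ^ s) ∂volume :=
    ofReal_integral_eq_lintegral_ofReal hfL
      (Filter.Eventually.of_forall fun x => Real.rpow_nonneg (abs_nonneg _) _)
  set V : ENNReal := volume (Metric.ball (0 : EuclideanSpace ℝ (Fin n)) 1) with hV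
  have hVtop : V ≠ ⊤ := measure_ball_lt_top.ne
  have hω0 : (0:ℝ) < V.toReal := Stmt12Aux.hω_pos
  have hmeas : Measurable (schwarzSymm n A f) :=
    Stmt12Aux.measurable_schwarz hn0 hA hAfin hf hs0 hJ
  have key1 := Stmt12Aux.lintegral_rpow_schwarz_le hn0 hA hAfin hf hs0 hJ
  set L : ℝ → ENNReal := fun ρ =>
    ∫⁻ x in Metric.ball (0 : EuclideanSpace ℝ (Fin n)) ρ,
      ENNReal.ofReal (schwarzSymm n A f x) ∂volume with hL
  have hLle : ∀ ρ : ℝ, 0 ≤ ρ →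
      L ρ ≤ (ENNReal.ofReal Ir) ^ (1/s) * (ENNReal.ofReal (ρ ^ n) * V) ^ (1/s') := by
    intro ρ hρ
    have hmeas' : AEMeasurable (fun x => ENNReal.ofReal (schwarzSymm n A f x))
        (volume.restrict (Metric.ball (0 : EuclideanSpace ℝ (Fin n)) ρ)) :=
      (hmeas.ennreal_ofReal).aemeasurable
    have H := ENNReal.lintegral_mul_le_Lp_mul_Lq
      (volume.restrict (Metric.ball (0 : EuclideanSpace ℝ (Fin n)) ρ)) hconj hmeas'
      (aemeasurable_const (b := (1 : ENNReal)))
    simp only [Pi.mul_apply, mul_one, ENNReal.one_rpow, setLIntegral_one] at H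
    refine H.trans (mul_le_mul' ?_ ?_)
    · refine ENNReal.rpow_le_rpow ?_ (by positivity)
      calc ∫⁻ x in Metric.ball (0 : EuclideanSpace ℝ (Fin n)) ρ,
            ENNReal.ofReal (schwarzSymm n A f x) ^ s ∂volume
          = ∫⁻ x in Metric.ball (0 : EuclideanSpace ℝ (Fin n)) ρ,
            ENNReal.ofReal (schwarzSymm n A f x ^ s) ∂volume :=
            lintegral_congr fun x =>
              ENNReal.ofReal_rpow_of_nonneg (Stmt12Aux.schwarz_nonneg x) hs0.le
        _ ≤ ∫⁻ x, ENNReal.ofReal (schwarzSymm n A f x ^ s) ∂volume :=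
            setLIntegral_le_lintegral _ _
        _ ≤ ∫⁻ y in A, ENNReal.ofReal (|f y| ^ s) ∂volume := key1
        _ = ENNReal.ofReal Ir := hJI.symm
    · refine ENNReal.rpow_le_rpow ?_ (by positivity)
      calc volume (Metric.ball (0 : EuclideanSpace ℝ (Fin n)) ρ)
          ≤ volume (Metric.closedBall (0 : EuclideanSpace ℝ (Fin n)) ρ) :=
            measure_mono Metric.ball_subset_closedBall
        _ = ENNReal.ofReal (ρ ^ n) * V := by
            rw [Measure.addHaar_closedBall _ _ hρ, finrank_euclideanSpace_fin]
  have hBfin : ∀ ρ : ℝ,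
      (ENNReal.ofReal Ir) ^ (1/s) * (ENNReal.ofReal (ρ ^ n) * V) ^ (1/s') ≠ ⊤ :=
    fun ρ => ENNReal.mul_ne_top
      (ENNReal.rpow_ne_top_of_nonneg (by positivity) ENNReal.ofReal_ne_top)
      (ENNReal.rpow_ne_top_of_nonneg (by positivity)
        (ENNReal.mul_ne_top ENNReal.ofReal_ne_top hVtop))
  have hLfin : ∀ ρ : ℝ, L ρ ≠ ⊤ := by
    intro ρ
    rcases le_or_gt ρ 0 with h | h
    · rw [hL]
      simp [Metric.ball_eq_empty.mpr h]
    · exact ne_top_of_le_ne_top (hBfin ρ) (hLle ρ h.le)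
  have hinner_eq : ∀ ρ : ℝ,
      (∫ x in Metric.ball (0 : EuclideanSpace ℝ (Fin n)) ρ, schwarzSymm n A f x) =
        (L ρ).toReal := fun ρ =>
    integral_eq_lintegral_of_nonneg_ae
      (Filter.Eventually.of_forall Stmt12Aux.schwarz_nonneg) hmeas.aestronglyMeasurable
  have hinner_nonneg : ∀ ρ : ℝ,
      0 ≤ ∫ x in Metric.ball (0 : EuclideanSpace ℝ (Fin n)) ρ, schwarzSymm n A f x :=
    fun ρ => integral_nonneg fun x => Stmt12Aux.schwarz_nonneg x
  have hmono : Monotone (fun ρ : ℝ =>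
      ∫ x in Metric.ball (0 : EuclideanSpace ℝ (Fin n)) ρ, schwarzSymm n A f x) := by
    intro a b hab
    simp only
    rw [hinner_eq a, hinner_eq b]
    exact ENNReal.toReal_mono (hLfin b) (lintegral_mono_set (Metric.ball_subset_ball hab))
  have hinner_le : ∀ ρ : ℝ, 0 ≤ ρ →
      (∫ x in Metric.ball (0 : EuclideanSpace ℝ (Fin n)) ρ, schwarzSymm n A f x) ≤
        Ir ^ (1/s) * (ρ ^ n * V.toReal) ^ (1/s') := by
    intro ρ hρ
    rw [hinner_eq]
    have h2 : ((ENNReal.ofReal Ir) ^ (1/s) * (ENNReal.ofReal (ρ ^ n) * V) ^ (1/s')).toReal =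
        Ir ^ (1/s) * (ρ ^ n * V.toReal) ^ (1/s') := by
      rw [ENNReal.toReal_mul, ← ENNReal.toReal_rpow, ← ENNReal.toReal_rpow,
        ENNReal.toReal_ofReal hIr0, ENNReal.toReal_mul, ENNReal.toReal_ofReal (pow_nonneg hρ n)]
    rw [← h2]
    exact ENNReal.toReal_mono (hBfin ρ) (hLle ρ hρ)
  set C : ℝ := (Ir ^ (1/s) * V.toReal ^ (1/s')) ^ (1/(p-1)) with hC
  have hC0 : 0 ≤ C :=
    Real.rpow_nonneg (mul_nonneg (Real.rpow_nonneg hIr0 _) (Real.rpow_nonneg hω0.le _)) _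
  have hα1 : (θ + 1 - p)/(p-1) + 1 = θ/(p-1) := by field_simp; ring
  have hα : -1 < (θ + 1 - p)/(p-1) := by
    have := div_pos hθ0 hp1'
    linarith
  -- pointwise bound
  have hgh : ∀ ρ ∈ Icc (0:ℝ) 1,
      ρ ^ (-((n : ℝ) - 1) / (p - 1)) *
        (∫ x in Metric.ball (0 : EuclideanSpace ℝ (Fin n)) ρ, schwarzSymm n A f x) ^
          (1 / (p - 1)) ≤ C * ρ ^ ((θ + 1 - p)/(p-1)) := by
    rintro ρ ⟨hρ0, hρ1⟩
    rcases eq_or_lt_of_le hρ0 with hz | hρpos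
    · rw [← hz, Real.zero_rpow (by
        have : -((n:ℝ)-1)/(p-1) < 0 :=
          div_neg_of_neg_of_pos (by linarith) hp1'
        exact this.ne), zero_mul]
      exact mul_nonneg hC0 (Real.rpow_nonneg le_rfl _)
    · have h1 : (∫ x in Metric.ball (0 : EuclideanSpace ℝ (Fin n)) ρ,
          schwarzSymm n A f x) ^ (1/(p-1)) ≤
          (Ir ^ (1/s) * (ρ ^ n * V.toReal) ^ (1/s')) ^ (1/(p-1)) :=
        Real.rpow_le_rpow (hinner_nonneg ρ) (hinner_le ρ hρ0) (by positivity)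
      have key : ρ ^ (-((n:ℝ)-1)/(p-1)) *
          (Ir ^ (1/s) * (ρ ^ n * V.toReal) ^ (1/s')) ^ (1/(p-1)) =
          C * ρ ^ ((θ + 1 - p)/(p-1)) := by
        have e1 : (ρ ^ n * V.toReal) ^ (1/s') =
            ρ ^ ((n:ℝ) * (1/s')) * V.toReal ^ (1/s') := by
          rw [Real.mul_rpow (pow_nonneg hρpos.le n) hω0.le, ← Real.rpow_natCast ρ n,
            ← Real.rpow_mul hρpos.le]
        rw [e1, show Ir ^ (1/s) * (ρ ^ ((n:ℝ)*(1/s')) * V.toReal ^ (1/s')) =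
            (Ir ^ (1/s) * V.toReal ^ (1/s')) * ρ ^ ((n:ℝ)*(1/s')) from by ring,
          Real.mul_rpow (mul_nonneg (Real.rpow_nonneg hIr0 _) (Real.rpow_nonneg hω0.le _))
            (Real.rpow_nonneg hρpos.le _), ← Real.rpow_mul hρpos.le, ← hC]
        have he : -((n:ℝ)-1)/(p-1) + ((n:ℝ)*(1/s'))*(1/(p-1)) = (θ + 1 - p)/(p-1) := by
          have h3 : (n:ℝ) * (1/s') = n - (p-θ) := by rw [mul_one_div, hns']
          rw [h3]; field_simp; ring
        calc ρ ^ (-((n:ℝ)-1)/(p-1)) * (C * ρ ^ (((n:ℝ)*(1/s'))*(1/(p-1)))) =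
            C * (ρ ^ (-((n:ℝ)-1)/(p-1)) * ρ ^ (((n:ℝ)*(1/s'))*(1/(p-1)))) := by ring
          _ = C * ρ ^ (-((n:ℝ)-1)/(p-1) + ((n:ℝ)*(1/s'))*(1/(p-1))) := by
              rw [← Real.rpow_add hρpos]
          _ = C * ρ ^ ((θ + 1 - p)/(p-1)) := by rw [he]
      calc ρ ^ (-((n : ℝ) - 1) / (p - 1)) *
            (∫ x in Metric.ball (0 : EuclideanSpace ℝ (Fin n)) ρ, schwarzSymm n A f x) ^
              (1 / (p - 1))
          ≤ ρ ^ (-((n:ℝ)-1)/(p-1)) *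
            (Ir ^ (1/s) * (ρ ^ n * V.toReal) ^ (1/s')) ^ (1/(p-1)) :=
            mul_le_mul_of_nonneg_left h1 (Real.rpow_nonneg hρ0 _)
        _ = C * ρ ^ ((θ + 1 - p)/(p-1)) := key
  have hh_int : IntervalIntegrable (fun ρ : ℝ => C * ρ ^ ((θ + 1 - p)/(p-1))) volume 0 1 :=
    (intervalIntegral.intervalIntegrable_rpow' hα).const_mul C
  have hg_meas : Measurable (fun ρ : ℝ => ρ ^ (-((n : ℝ) - 1) / (p - 1)) *
      (∫ x in Metric.ball (0 : EuclideanSpace ℝ (Fin n)) ρ, schwarzSymm n A f x) ^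
        (1 / (p - 1))) :=
    (measurable_id.pow measurable_const).mul (hmono.measurable.pow measurable_const)
  have hg_int : IntervalIntegrable (fun ρ : ℝ => ρ ^ (-((n : ℝ) - 1) / (p - 1)) *
      (∫ x in Metric.ball (0 : EuclideanSpace ℝ (Fin n)) ρ, schwarzSymm n A f x) ^
        (1 / (p - 1))) volume 0 1 := by
    refine hh_int.mono_fun hg_meas.aestronglyMeasurable ?_
    rw [uIoc_of_le (zero_le_one (α := ℝ))]
    filter_upwards [self_mem_ae_restrict measurableSet_Ioc] with ρ hρ
    have hρ' : ρ ∈ Icc (0:ℝ) 1 := ⟨hρ.1.le, hρ.2⟩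
    simp only [Real.norm_eq_abs]
    rw [abs_of_nonneg (mul_nonneg (Real.rpow_nonneg hρ.1.le _)
      (Real.rpow_nonneg (hinner_nonneg ρ) _))]
    exact le_trans (hgh ρ hρ') (le_abs_self _)
  refine le_trans (intervalIntegral.integral_mono_on zero_le_one hg_int hh_int hgh) ?_
  rw [intervalIntegral.integral_const_mul, integral_rpow (Or.inl hα), hα1, Real.one_rpow,
    Real.zero_rpow (ne_of_gt (div_pos hθ0 hp1')), sub_zero, one_div_div]
  have hspn : s * p - (n:ℝ) = s * θ := by rw [hn_eq]; ring
  have hfrac : s * (p-1) / (s*p - n) = (p-1)/θ := by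
    rw [hspn, mul_div_mul_left _ _ (ne_of_gt hs0)]
  rw [hfrac]
  have hCeq : C = (Ir ^ (1/s)) ^ (1/(p-1)) * V.toReal ^ (1/(s'*(p-1))) := by
    rw [hC, Real.mul_rpow (Real.rpow_nonneg hIr0 _) (Real.rpow_nonneg hω0.le _),
      ← Real.rpow_mul hω0.le, div_mul_div_comm, one_mul]
  rw [hCeq]
  ring_nf
  exact le_refl _
end
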